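/- arXiv:1411.7851 — 2 statements merged into one kernel-verified Lean document; each statement's English description precedes it below -/
import Mathlib

section
/- Let I = (I_1, ..., I_r) be a composition of N = |I| with r ≥ 2, and let 1 ≤ a ≤ r-1. Set S = I_1 + ... + I_a. Then -(I_a + I_{a+1}) m_I = [ C(N-1, S-1)^2 (N-S) + C(N-1, (N-S)-1)^2 S ] · m_{(I_1,...,I_a)} · m_{(I_{a+1},...,I_r)}, where C denotes the binomial coefficient. -/
/-- The multiplicity `m_I` associated to a composition `I = (I_1, …, I_r)`. -/
noncomputable def mcoef (I : List ℕ) : ℚ :=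
  -(-1 : ℚ) ^ I.length * (Nat.factorial I.sum) * (Nat.factorial (I.sum - 1))
    * (I.map (fun k => (1 : ℚ) / ((Nat.factorial k : ℚ) * (Nat.factorial (k - 1) : ℚ)))).prod
    * ((I.zip I.tail).map (fun p => (1 : ℚ) / ((p.1 : ℚ) + (p.2 : ℚ)))).prod

lemma key_fact (s t : ℕ) :
    ((s + 1 + (t + 1)).factorial : ℚ) * ((s + t + 1).factorial : ℚ)
      = (((s + t + 1).choose s : ℚ) ^ 2 * ((t : ℚ) + 1)
          + ((s + t + 1).choose t : ℚ) ^ 2 * ((s : ℚ) + 1))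
        * (((s + 1).factorial : ℚ) * (s.factorial : ℚ))
        * (((t + 1).factorial : ℚ) * (t.factorial : ℚ)) := by
  rw [Nat.cast_choose ℚ (by omega : s ≤ s + t + 1), Nat.cast_choose ℚ (by omega : t ≤ s + t + 1)]
  have e1 : s + t + 1 - s = t + 1 := by omega
  have e2 : s + t + 1 - t = s + 1 := by omega
  have e3 : s + 1 + (t + 1) = s + t + 2 := by omega
  rw [e1, e2, e3]
  have f1 : ((s + t + 2).factorial : ℚ) = (s + t + 2) * (s + t + 1).factorial := by
    rw [show s + t + 2 = (s + t + 1) + 1 from rfl, Nat.factorial_succ]; push_cast; ring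
  have f2 : ((s + 1).factorial : ℚ) = (s + 1) * s.factorial := by
    rw [Nat.factorial_succ]; push_cast; ring
  have f3 : ((t + 1).factorial : ℚ) = (t + 1) * t.factorial := by
    rw [Nat.factorial_succ]; push_cast; ring
  rw [f1, f2, f3]
  have ns : (s.factorial : ℚ) ≠ 0 := Nat.cast_ne_zero.2 s.factorial_ne_zero
  have nt : (t.factorial : ℚ) ≠ 0 := Nat.cast_ne_zero.2 t.factorial_ne_zero
  field_simp
  ring

lemma zip_tail_split (J₀ K₀ : List ℕ) (x y : ℕ) :
    ((J₀ ++ x :: y :: K₀).zip (J₀ ++ x :: y :: K₀).tail)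
      = ((J₀ ++ [x]).zip (J₀ ++ [x]).tail) ++ (x, y) :: ((y :: K₀).zip (y :: K₀).tail) := by
  induction J₀ with
  | nil => simp
  | cons z J₀ ih => cases J₀ <;> simp_all

theorem stmt_2 (r : ℕ) (hr : 2 ≤ r) (I : List ℕ) (hlen : I.length = r)
    (hpos : ∀ x ∈ I, 0 < x) (a : ℕ) (ha1 : 1 ≤ a) (ha2 : a ≤ r - 1) :
    let N := I.sum;
    let S := (I.take a).sum;
    -((I.getD (a - 1) 0 : ℚ) + (I.getD a 0 : ℚ)) * mcoef I
      = (((Nat.choose (N - 1) (S - 1) : ℚ)) ^ 2 * ((N : ℚ) - (S : ℚ))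
          + ((Nat.choose (N - 1) ((N - S) - 1) : ℚ)) ^ 2 * (S : ℚ))
        * mcoef (I.take a) * mcoef (I.drop a) := by
  intro N S
  have har : a < r := by omega
  have hlenJ : (I.take a).length = a := by rw [List.length_take, hlen]; omega
  have hJne : I.take a ≠ [] := by intro h; rw [h] at hlenJ; simp at hlenJ; omega
  have hKne : I.drop a ≠ [] := by
    intro h
    have : (I.drop a).length = I.length - a := List.length_drop
    rw [h, hlen] at this; simp at this; omega
  obtain ⟨J₀, x, hJ0⟩ := (List.eq_nil_or_concat (I.take a)).resolve_left hJne
  obtain ⟨y, K₀, hK0⟩ := List.exists_cons_of_ne_nil hKne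
  have hI : I = J₀ ++ x :: y :: K₀ := by
    conv_lhs => rw [← List.take_append_drop a I, hJ0, hK0]
    simp
  have hJ0len : J₀.length = a - 1 := by
    have := hlenJ; rw [hJ0] at this; simp at this; omega
  have hgx : I.getD (a-1) 0 = x := by
    rw [hI, ← hJ0len, List.getD_append_right _ _ _ _ le_rfl]
    simp
  have hgy : I.getD a 0 = y := by
    have : a = J₀.length + 1 := by omega
    rw [hI, this, List.getD_append_right _ _ _ _ (by omega)]
    simp
  have hxpos : 0 < x := hpos x (by rw [hI]; simp)
  have hypos : 0 < y := hpos y (by rw [hI]; simp)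
  obtain ⟨s, hs⟩ : ∃ s, J₀.sum + x = s + 1 := ⟨J₀.sum + x - 1, by omega⟩
  obtain ⟨t, ht⟩ : ∃ t, y + K₀.sum = t + 1 := ⟨y + K₀.sum - 1, by omega⟩
  have hS : S = s + 1 := by
    show (I.take a).sum = s + 1
    rw [hJ0]; simp; omega
  have hN : N = s + 1 + (t + 1) := by
    show I.sum = s + 1 + (t + 1)
    rw [hI]; simp; omega
  rw [hgx, hgy, hN, hS, hJ0, hK0]
  have harith1 : s + 1 + (t + 1) - 1 = s + t + 1 := by omega
  have harith2 : s + 1 - 1 = s := by omega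
  have harith3 : s + 1 + (t + 1) - (s + 1) = t + 1 := by omega
  have harith4 : t + 1 - 1 = t := by omega
  rw [harith1, harith2, harith3, harith4]
  simp only [mcoef, hI, zip_tail_split, List.concat_eq_append, List.map_append,
    List.prod_append, List.length_append, List.sum_append, List.map_cons, List.prod_cons,
    List.sum_cons, List.length_cons, List.map_nil, List.prod_nil, List.sum_nil,
    List.length_nil, mul_one, add_zero]
  have e1 : J₀.sum + (x + (y + K₀.sum)) = s + 1 + (t + 1) := by omega
  have e2 : J₀.sum + (x + (y + K₀.sum)) - 1 = s + t + 1 := by omega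
  rw [e1, harith1, hs, harith2, ht, harith4]
  have epow : ((-1 : ℚ)) ^ (J₀.length + (K₀.length + 1 + 1))
      = (-1 : ℚ) ^ (J₀.length + (0 + 1)) * (-1 : ℚ) ^ (K₀.length + 1) := by
    rw [← pow_add]; congr 1; omega
  rw [epow]
  have hxyne : ((x : ℚ) + (y : ℚ)) ≠ 0 := by positivity
  have hinv : ((x : ℚ) + (y : ℚ)) * (1 / ((x : ℚ) + (y : ℚ))) = 1 := by
    field_simp
  have key := key_fact s t
  push_cast
  push_cast at key
  set E1 : ℚ := (-1 : ℚ) ^ (J₀.length + (0 + 1)) with hE1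
  set E2 : ℚ := (-1 : ℚ) ^ (K₀.length + 1) with hE2
  set PJ : ℚ := (List.map (fun k => (1 : ℚ) / ((k.factorial : ℚ) * ((k - 1).factorial : ℚ))) J₀).prod with hPJ
  set PK : ℚ := (List.map (fun k => (1 : ℚ) / ((k.factorial : ℚ) * ((k - 1).factorial : ℚ))) K₀).prod with hPK
  set ZJ : ℚ := (List.map (fun p : ℕ × ℕ => (1 : ℚ) / ((p.1 : ℚ) + (p.2 : ℚ))) ((J₀ ++ [x]).zip (J₀ ++ [x]).tail)).prod with hZJ
  set ZK : ℚ := (List.map (fun p : ℕ × ℕ => (1 : ℚ) / ((p.1 : ℚ) + (p.2 : ℚ))) ((y :: K₀).zip (y :: K₀).tail)).prod with hZK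
  set fx : ℚ := (1 : ℚ) / ((x.factorial : ℚ) * ((x - 1).factorial : ℚ)) with hfx
  set fy : ℚ := (1 : ℚ) / ((y.factorial : ℚ) * ((y - 1).factorial : ℚ)) with hfy
  linear_combination
    (E1 * E2 * (PJ * fx * fy * PK) * (ZJ * ZK) * ((((s + 1 + (t + 1)).factorial : ℚ)) * (((s + t + 1).factorial : ℚ)))) * hinv
      + (E1 * E2 * (PJ * fx * fy * PK) * (ZJ * ZK)) * key
end

section
/- Let I = (I_1, ..., I_r) be a composition of N = |I| with r ≥ 2. Then -(N - I_r) m_I = Σ_{a=1}^{r-1} C(N-1, S_a - 1)^2 (N - S_a) m_{(I_1,...,I_a)} m_{(I_{a+1},...,I_r)}, where S_a = I_1 + ... + I_a and C denotes the binomial coefficient. -/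
noncomputable def Pp (I : List ℕ) : ℚ :=
  (I.map (fun k => (1 : ℚ) / ((Nat.factorial k : ℚ) * (Nat.factorial (k - 1) : ℚ)))).prod

noncomputable def Qq (I : List ℕ) : ℚ :=
  ((I.zip I.tail).map (fun p => (1 : ℚ) / ((p.1 : ℚ) + (p.2 : ℚ)))).prod

lemma mcoef_eq (I : List ℕ) : mcoef I
    = -(-1 : ℚ) ^ I.length * (Nat.factorial I.sum) * (Nat.factorial (I.sum - 1)) * Pp I * Qq I := rfl

lemma Pp_append (A B : List ℕ) : Pp (A ++ B) = Pp A * Pp B := by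
  simp [Pp, List.map_append, List.prod_append]

lemma pairs_append (A B : List ℕ) (hA : A ≠ []) (hB : B ≠ []) :
    (A ++ B).zip (A ++ B).tail
      = A.zip A.tail ++ (A.getLast hA, B.head hB) :: B.zip B.tail := by
  induction A with
  | nil => simp at hA
  | cons x t ih =>
    cases t with
    | nil =>
      cases B with
      | nil => simp at hB
      | cons b bs => simp [List.zip]
    | cons y s =>
      have := ih (by simp)
      simp only [List.cons_append, List.tail_cons, List.zip_cons_cons] at *
      rw [this]
      simp [List.getLast_cons]

lemma Qq_append (A B : List ℕ) (hA : A ≠ []) (hB : B ≠ []) :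
    Qq (A ++ B) = Qq A * (1 / ((A.getLast hA : ℚ) + (B.head hB : ℚ))) * Qq B := by
  simp only [Qq, pairs_append A B hA hB, List.map_append, List.map_cons, List.prod_append,
    List.prod_cons]
  ring

lemma key (I : List ℕ) (hpos : ∀ x ∈ I, 0 < x) (a : ℕ) (ha1 : 1 ≤ a) (ha2 : a < I.length) :
    ((Nat.choose (I.sum - 1) ((I.take a).sum - 1) : ℚ)) ^ 2
      * ((I.sum : ℚ) - ((I.take a).sum : ℚ))
      * mcoef (I.take a) * mcoef (I.drop a)
    = (-1 : ℚ) ^ I.length * ((Nat.factorial (I.sum - 1) : ℚ)) ^ 2 * Pp I * Qq I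
        * ((I.take a).sum : ℚ) * ((I.getD (a - 1) 0 : ℚ) + (I.getD a 0 : ℚ)) := by
  set A := I.take a with hA
  set B := I.drop a with hB
  have hAB : A ++ B = I := List.take_append_drop a I
  have hAlen : A.length = a := by
    rw [hA, List.length_take]; omega
  have hBlen : B.length = I.length - a := by rw [hB, List.length_drop]
  have hAne : A ≠ [] := by
    intro h; rw [h] at hAlen; simp at hAlen; omega
  have hBne : B ≠ [] := by
    intro h; rw [h] at hBlen; simp at hBlen; omega
  have hApos : ∀ x ∈ A, 0 < x := fun x hx => hpos x (List.mem_of_mem_take hx)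
  have hBpos : ∀ x ∈ B, 0 < x := fun x hx => hpos x (List.mem_of_mem_drop hx)
  have hS1 : 1 ≤ A.sum := by
    have := List.sum_pos A hApos hAne; omega
  have hT1 : 1 ≤ B.sum := by
    have := List.sum_pos B hBpos hBne; omega
  have hN : I.sum = A.sum + B.sum := by
    rw [← hAB, List.sum_append]
  -- getLast and head
  have hLlt : A.length - 1 < A.length := Nat.sub_lt (by omega) one_pos
  have hL : A.getLast hAne = I.getD (a - 1) 0 := by
    have e1 : A.getLast hAne = A.getD (A.length - 1) 0 := by
      rw [List.getD_eq_getElem _ _ hLlt, List.getLast_eq_getElem]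
    have e2 : A.getD (A.length - 1) 0 = A.getD (a - 1) 0 := by rw [hAlen]
    have e3 : A.getD (a - 1) 0 = I.getD (a - 1) 0 := by
      rw [List.getD_eq_getElem _ _ (by omega),
        List.getD_eq_getElem _ _ (show a - 1 < I.length by omega)]
      simp [hA]
    rw [e1, e2, e3]
  have hH : B.head hBne = I.getD a 0 := by
    have e1 : B.head hBne = B.getD 0 0 := by
      rw [List.getD_eq_getElem _ _ (by omega), List.head_eq_getElem]
    have e2 : B.getD 0 0 = I.getD a 0 := by
      rw [List.getD_eq_getElem _ _ (by omega), List.getD_eq_getElem _ _ ha2]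
      simp [hB]
    rw [e1, e2]
  have hLpos : 0 < A.getLast hAne := hApos _ (List.getLast_mem hAne)
  have hHpos : 0 < B.head hBne := hBpos _ (List.head_mem hBne)
  -- choose
  have hle : A.sum - 1 ≤ I.sum - 1 := by omega
  have hsub : (I.sum - 1) - (A.sum - 1) = B.sum := by omega
  have hc : ((Nat.choose (I.sum - 1) (A.sum - 1)) : ℚ)
      = (Nat.factorial (I.sum - 1) : ℚ)
        / ((Nat.factorial (A.sum - 1) : ℚ) * (Nat.factorial B.sum : ℚ)) := by
    rw [Nat.cast_choose ℚ hle, hsub]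
  have hfS : ((Nat.factorial A.sum : ℚ)) = (A.sum : ℚ) * (Nat.factorial (A.sum - 1) : ℚ) := by
    rw [← Nat.cast_mul, ← Nat.mul_factorial_pred (by omega)]
  have hfT : ((Nat.factorial B.sum : ℚ)) = (B.sum : ℚ) * (Nat.factorial (B.sum - 1) : ℚ) := by
    rw [← Nat.cast_mul, ← Nat.mul_factorial_pred (by omega)]
  have hNS : (I.sum : ℚ) - (A.sum : ℚ) = (B.sum : ℚ) := by
    rw [hN]; push_cast; ring
  have hsign : (-(-1 : ℚ) ^ A.length) * (-(-1 : ℚ) ^ B.length) = (-1 : ℚ) ^ I.length := by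
    rw [← hAB, List.length_append]
    rw [pow_add]; ring
  have hPp : Pp I = Pp A * Pp B := by rw [← hAB, Pp_append]
  have hQq : Qq I = Qq A * (1 / ((A.getLast hAne : ℚ) + (B.head hBne : ℚ))) * Qq B := by
    conv_lhs => rw [← hAB]
    exact Qq_append A B hAne hBne
  -- nonzero facts
  have hfne : ∀ n : ℕ, ((Nat.factorial n : ℚ)) ≠ 0 := fun n => by
    exact_mod_cast Nat.factorial_ne_zero n
  have hTne : (B.sum : ℚ) ≠ 0 := by
    exact_mod_cast Nat.pos_iff_ne_zero.mp (by omega)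
  have hLHne : ((A.getLast hAne : ℚ) + (B.head hBne : ℚ)) ≠ 0 := by
    have : (0:ℚ) < (A.getLast hAne : ℚ) + (B.head hBne : ℚ) := by
      push_cast
      have : (0:ℚ) < (A.getLast hAne : ℚ) := by exact_mod_cast hLpos
      have h2 : (0:ℚ) ≤ (B.head hBne : ℚ) := by positivity
      linarith
    linarith
  rw [mcoef_eq A, mcoef_eq B, hc, hNS, hPp, hQq, ← hL, ← hH, hfS, hfT, ← hsign]
  have hx : (List.map (Nat.cast : ℕ → ℚ) B).sum = (B.sum : ℚ) :=
    (Nat.cast_list_sum B).symm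
  have hTne' : (List.map (Nat.cast : ℕ → ℚ) B).sum ≠ 0 := by rw [hx]; exact hTne
  have hf1 : ((Nat.factorial (A.sum - 1) : ℚ)) ≠ 0 := hfne _
  have hf2 : ((Nat.factorial (B.sum - 1) : ℚ)) ≠ 0 := hfne _
  field_simp

theorem stmt_3 (r : ℕ) (hr : 2 ≤ r) (I : List ℕ) (hlen : I.length = r)
    (hpos : ∀ x ∈ I, 0 < x) :
    let N := I.sum;
    -(((N : ℚ)) - (I.getD (r - 1) 0 : ℚ)) * mcoef I
      = ∑ a ∈ Finset.Icc 1 (r - 1),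
          ((Nat.choose (N - 1) ((I.take a).sum - 1) : ℚ)) ^ 2
            * ((N : ℚ) - ((I.take a).sum : ℚ))
            * mcoef (I.take a) * mcoef (I.drop a) := by
  intro N
  have hIne : I ≠ [] := by
    intro h; rw [h] at hlen; simp at hlen; omega
  have hN1 : 0 < I.sum := List.sum_pos I hpos hIne
  set s : ℕ → ℚ := fun k => (((I.take k).sum : ℕ) : ℚ) with hs
  set K : ℚ := (-1 : ℚ) ^ I.length * ((Nat.factorial (I.sum - 1) : ℚ)) ^ 2 * Pp I * Qq I
    with hK
  set g : ℕ → ℚ := fun k => s k * s (k + 1) with hg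
  have hstep : ∀ k, k < I.length → s (k + 1) = s k + (I.getD k 0 : ℚ) := by
    intro k hk
    rw [hs]
    simp only
    rw [List.sum_take_succ _ _ hk, List.getD_eq_getElem _ _ hk]
    push_cast [List.sum_take_succ _ _ hk]
    ring
  have hterm : ∀ a ∈ Finset.Icc 1 (r - 1),
      ((Nat.choose (N - 1) ((I.take a).sum - 1) : ℚ)) ^ 2
        * ((N : ℚ) - ((I.take a).sum : ℚ))
        * mcoef (I.take a) * mcoef (I.drop a) = K * (g a - g (a - 1)) := by
    intro a ha
    rw [Finset.mem_Icc] at ha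
    have ha1 : 1 ≤ a := ha.1
    have ha2 : a < I.length := by omega
    rw [key I hpos a ha1 ha2]
    have e1 : s (a + 1) = s a + (I.getD a 0 : ℚ) := hstep a ha2
    have e2 : s a = s (a - 1) + (I.getD (a - 1) 0 : ℚ) := by
      have := hstep (a - 1) (by omega)
      rw [show a - 1 + 1 = a by omega] at this
      exact this
    have e3 : (((I.take a).sum : ℕ) : ℚ) = s a := rfl
    rw [hg]
    simp only
    rw [show a - 1 + 1 = a by omega, e1, e3, e2, hK]
    ring
  rw [Finset.sum_congr rfl hterm, ← Finset.mul_sum]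
  have htel : ∑ a ∈ Finset.Icc 1 (r - 1), (g a - g (a - 1)) = g (r - 1) - g 0 := by
    have hIoc : Finset.Icc 1 (r - 1) = Finset.Ico 1 r := by
      rw [← Finset.Ico_add_one_right_eq_Icc, show r - 1 + 1 = r by omega]
    rw [hIoc, Finset.sum_Ico_eq_sum_range]
    have : ∀ i ∈ Finset.range (r - 1), g (1 + i) - g (1 + i - 1) = g (i + 1) - g i := by
      intro i _
      rw [show 1 + i = i + 1 by omega, show i + 1 - 1 = i by omega]
    rw [Finset.sum_congr rfl this, Finset.sum_range_sub g]
  have hg0 : g 0 = 0 := by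
    rw [hg]; simp [hs]
  have hsr : s r = (I.sum : ℚ) := by
    rw [hs]
    simp only
    rw [← hlen, List.take_length]
  have hsr1 : s (r - 1) = (I.sum : ℚ) - (I.getD (r - 1) 0 : ℚ) := by
    have := hstep (r - 1) (by omega)
    rw [show r - 1 + 1 = r by omega, hsr] at this
    linarith
  have hfN : ((Nat.factorial I.sum : ℚ)) = (I.sum : ℚ) * (Nat.factorial (I.sum - 1) : ℚ) := by
    rw [← Nat.cast_mul, ← Nat.mul_factorial_pred hN1.ne']
  rw [htel, hg0, hg]
  simp only
  rw [show r - 1 + 1 = r by omega, hsr, hsr1]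
  rw [mcoef_eq, hfN, hK]
  show -(((I.sum : ℕ) : ℚ) - (I.getD (r - 1) 0 : ℚ)) * _ = _
  ring
end
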